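/- Let X and Y be complex Banach spaces, A ∈ B(X), B ∈ B(Y), C ∈ B(Y, X), and let M_C ∈ B(X ⊕ Y) be the upper-triangular operator matrix M_C(x, y) = (Ax + Cy, By). Then σ_SF−(M_C) ∪ S(B) = σ_SF−(A) ∪ σ_SF−(B) ∪ S(B), where σ_SF− denotes the lower semi-Fredholm spectrum and S(B) the set of points where B fails to have the single valued extension property. -/

import Mathlib

noncomputable section

open ContinuousLinearMap Metric Set

variable {E : Type*} [NormedAddCommGroup E] [NormedSpace ℂ E]
variable {X Y : Type*} [NormedAddCommGroup X] [NormedSpace ℂ X] [CompleteSpace X]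
  [NormedAddCommGroup Y] [NormedSpace ℂ Y] [CompleteSpace Y]

/-- `T` is lower semi-Fredholm: its range has finite codimension. -/
def IsLowerSemiFredholm (T : E →L[ℂ] E) : Prop :=
  FiniteDimensional ℂ (E ⧸ LinearMap.range (T : E →ₗ[ℂ] E))

/-- The lower semi-Fredholm spectrum. -/
def lowerSFSpectrum (T : E →L[ℂ] E) : Set ℂ :=
  {z | ¬ IsLowerSemiFredholm (T - z • 1)}

/-- `T` has the single valued extension property at `z₀`. -/
def HasSVEPAt (T : E →L[ℂ] E) (z₀ : ℂ) : Prop :=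
  ∃ r > (0 : ℝ), ∀ V : Set ℂ, V ⊆ ball z₀ r → IsOpen V →
    ∀ f : ℂ → E, AnalyticOnNhd ℂ f V → (∀ z ∈ V, (T - z • 1) (f z) = 0) →
      ∀ z ∈ V, f z = 0

/-- `S(T)`: the set of points where `T` fails to have the SVEP. -/
def svepFail (T : E →L[ℂ] E) : Set ℂ :=
  {z | ¬ HasSVEPAt T z}

/-- The upper-triangular operator matrix `M_C (x, y) = (A x + C y, B y)` on `X ⊕ Y`. -/
def ucMat (A : X →L[ℂ] X) (B : Y →L[ℂ] Y) (C : Y →L[ℂ] X) :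
    (X × Y) →L[ℂ] (X × Y) :=
  (A.comp (ContinuousLinearMap.fst ℂ X Y) + C.comp (ContinuousLinearMap.snd ℂ X Y)).prod
    (B.comp (ContinuousLinearMap.snd ℂ X Y))

section AuxAlgebra

variable {V : Type*} [AddCommGroup V] [Module ℂ V]

lemma surjQuot (p q : Submodule ℂ V) (h : p ⊔ q = ⊤) :
    Function.Surjective ((p.mkQ).comp q.subtype) := by
  intro c
  obtain ⟨x, rfl⟩ := p.mkQ_surjective c
  have hx : x ∈ p ⊔ q := h ▸ Submodule.mem_top
  obtain ⟨a, ha, b, hb, rfl⟩ := Submodule.mem_sup.1 hx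
  refine ⟨⟨b, hb⟩, ?_⟩
  simp only [LinearMap.comp_apply, Submodule.subtype_apply, Submodule.mkQ_apply]
  rw [Submodule.Quotient.eq]
  simpa using ha

lemma fd_quot_of_sup (p q : Submodule ℂ V) (h : p ⊔ q = ⊤) [FiniteDimensional ℂ q] :
    FiniteDimensional ℂ (V ⧸ p) :=
  Module.Finite.of_surjective _ (surjQuot p q h)

lemma finrank_quot_le_of_sup (p q : Submodule ℂ V) (h : p ⊔ q = ⊤) [FiniteDimensional ℂ q] :
    Module.finrank ℂ (V ⧸ p) ≤ Module.finrank ℂ q := by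
  have := fd_quot_of_sup p q h
  have hs := surjQuot p q h
  have := LinearMap.finrank_range_add_finrank_ker ((p.mkQ).comp q.subtype)
  rw [LinearMap.range_eq_top.2 hs, finrank_top] at this
  omega

lemma exists_fd_compl (p : Submodule ℂ V) [FiniteDimensional ℂ (V ⧸ p)] :
    ∃ q : Submodule ℂ V, FiniteDimensional ℂ q ∧ p ⊔ q = ⊤ := by
  obtain ⟨q, hq⟩ := p.exists_isCompl
  exact ⟨q, Module.Finite.equiv (Submodule.quotientEquivOfIsCompl p q hq),
    by simpa using hq.sup_eq_top⟩

lemma fd_quot_of_fd_sup (p q : Submodule ℂ V) [FiniteDimensional ℂ q]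
    (h : FiniteDimensional ℂ (V ⧸ (p ⊔ q))) : FiniteDimensional ℂ (V ⧸ p) := by
  obtain ⟨q', hq', hq'top⟩ := exists_fd_compl (p ⊔ q)
  have : p ⊔ (q ⊔ q') = ⊤ := by rw [← sup_assoc]; exact hq'top
  have : FiniteDimensional ℂ ↥(q ⊔ q') := Submodule.finiteDimensional_sup q q'
  exact fd_quot_of_sup p (q ⊔ q') ‹p ⊔ (q ⊔ q') = ⊤›

lemma inf_bot_of_min (p q : Submodule ℂ V) (h : p ⊔ q = ⊤) [FiniteDimensional ℂ q]
    (m : ℕ) (hq : Module.finrank ℂ q ≤ m) (hm : m ≤ Module.finrank ℂ (V ⧸ p)) :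
    p ⊓ q = ⊥ := by
  have hfd := fd_quot_of_sup p q h
  have hs := surjQuot p q h
  have hrn := LinearMap.finrank_range_add_finrank_ker ((p.mkQ).comp q.subtype)
  rw [LinearMap.range_eq_top.2 hs, finrank_top] at hrn
  have hker : Module.finrank ℂ (LinearMap.ker ((p.mkQ).comp q.subtype)) = 0 := by omega
  have hkerbot : LinearMap.ker ((p.mkQ).comp q.subtype) = ⊥ :=
    Submodule.finrank_eq_zero.1 hker
  ext x
  simp only [Submodule.mem_inf, Submodule.mem_bot]
  constructor
  · rintro ⟨hxp, hxq⟩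
    have : (⟨x, hxq⟩ : q) ∈ LinearMap.ker ((p.mkQ).comp q.subtype) := by
      simp only [LinearMap.mem_ker, LinearMap.comp_apply, Submodule.subtype_apply,
        Submodule.mkQ_apply]
      exact (Submodule.Quotient.mk_eq_zero p).2 hxp
    rw [hkerbot] at this
    simpa using this
  · rintro rfl; exact ⟨zero_mem _, zero_mem _⟩

end AuxAlgebra

/-- Surjectivization: a finite-rank operator `J` complementing the range of `T`. -/
lemma exists_surjectivization (T : E →L[ℂ] E)
    (h : FiniteDimensional ℂ (E ⧸ LinearMap.range (T : E →ₗ[ℂ] E))) :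
    ∃ J : (Fin (Module.finrank ℂ (E ⧸ LinearMap.range (T : E →ₗ[ℂ] E))) → ℂ) →L[ℂ] E,
      Function.Injective J ∧ LinearMap.range (T : E →ₗ[ℂ] E) ⊔ LinearMap.range (J : (Fin (Module.finrank ℂ (E ⧸ LinearMap.range (T : E →ₗ[ℂ] E))) → ℂ) →ₗ[ℂ] E) = ⊤ := by
  set Q := E ⧸ LinearMap.range (T : E →ₗ[ℂ] E)
  set d := Module.finrank ℂ Q
  let b : Module.Basis (Fin d) ℂ Q := Module.finBasis ℂ Q
  have hsurj := (LinearMap.range (T : E →ₗ[ℂ] E)).mkQ_surjective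
  choose e he using fun i => hsurj (b i)
  let Jlin : (Fin d → ℂ) →ₗ[ℂ] E := Fintype.linearCombination ℂ e
  have hkey : ∀ w, (LinearMap.range (T : E →ₗ[ℂ] E)).mkQ (Jlin w) = b.equivFun.symm w := by
    intro w
    simp only [Jlin, Fintype.linearCombination_apply, map_sum, map_smul, he,
      Module.Basis.equivFun_symm_apply]
  have : FiniteDimensional ℂ (Fin d → ℂ) := by infer_instance
  refine ⟨LinearMap.toContinuousLinearMap Jlin, ?_, ?_⟩
  · intro w w' hww
    have : (LinearMap.range (T : E →ₗ[ℂ] E)).mkQ (Jlin w) = (LinearMap.range (T : E →ₗ[ℂ] E)).mkQ (Jlin w') := by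
      simpa using congrArg (LinearMap.range (T : E →ₗ[ℂ] E)).mkQ hww
    rw [hkey, hkey] at this
    exact b.equivFun.symm.injective this
  · rw [eq_top_iff]
    intro v _
    set w := b.equivFun ((LinearMap.range (T : E →ₗ[ℂ] E)).mkQ v) with hw
    have hv : v - Jlin w ∈ LinearMap.range (T : E →ₗ[ℂ] E) := by
      rw [← Submodule.ker_mkQ (LinearMap.range (T : E →ₗ[ℂ] E))]
      rw [LinearMap.mem_ker, map_sub, hkey, hw, LinearEquiv.symm_apply_apply, sub_self]
    refine Submodule.mem_sup.2 ⟨v - Jlin w, hv, Jlin w, ⟨w, rfl⟩, by abel⟩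

/-- A power series with geometrically bounded vector coefficients is analytic. -/
lemma analytic_geom_series [CompleteSpace E] (u : ℕ → E) (M a : ℝ) (ha : 0 < a)
    (hb : ∀ n, ‖u n‖ ≤ M * a ^ n) :
    AnalyticOnNhd ℂ (fun μ : ℂ => ∑' n, μ ^ n • u n) (ball (0 : ℂ) a⁻¹) := by
  set p : FormalMultilinearSeries ℂ ℂ E :=
    fun n => ContinuousMultilinearMap.mkPiRing ℂ (Fin n) (u n)
  have h1 : ((a⁻¹.toNNReal : ℝ)) = a⁻¹ := Real.coe_toNNReal _ (by positivity)
  have hrad : (a⁻¹.toNNReal : ENNReal) ≤ p.radius := by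
    apply FormalMultilinearSeries.le_radius_of_bound p M
    intro n
    have hpn : ‖p n‖ = ‖u n‖ := ContinuousMultilinearMap.norm_mkPiRing (u n)
    rw [hpn, h1]
    calc ‖u n‖ * (a⁻¹) ^ n ≤ (M * a ^ n) * (a⁻¹) ^ n := by
          apply mul_le_mul_of_nonneg_right (hb n) (by positivity)
      _ = M := by
          rw [mul_assoc, ← mul_pow]
          field_simp
          simp
  have hpos : 0 < p.radius := by
    refine lt_of_lt_of_le ?_ hrad
    simpa using (by positivity : (0:ℝ) < a⁻¹)
  have hball := (p.hasFPowerSeriesOnBall hpos).analyticOnNhd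
  have hsum : (fun μ : ℂ => ∑' n, μ ^ n • u n) = p.sum := by
    funext μ
    unfold FormalMultilinearSeries.sum
    congr 1
    funext n
    simp [p, ContinuousMultilinearMap.mkPiRing_apply]
  rw [hsum]
  intro μ hμ
  apply hball
  have : ‖μ‖ < a⁻¹ := by simpa [mem_ball_zero_iff] using hμ
  simp only [EMetric.mem_ball, edist_zero_right]
  calc (‖μ‖₊ : ENNReal) < (a⁻¹.toNNReal : ENNReal) := by
        rw [ENNReal.coe_lt_coe, ← NNReal.coe_lt_coe, h1, coe_nnnorm]
        exact this
    _ ≤ p.radius := hrad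

/-- The analytic engine: analytic solution families for a perturbed surjection. -/
lemma engine {Z : Type*} [NormedAddCommGroup Z] [NormedSpace ℂ Z] [CompleteSpace Z]
    [CompleteSpace E] (S P : Z →L[ℂ] E) (hS : Function.Surjective S) :
    ∃ C > (0:ℝ), ∃ ρ > (0:ℝ), ∀ u₀ : Z, ∃ f : ℂ → Z,
      AnalyticOnNhd ℂ f (ball (0:ℂ) ρ) ∧ f 0 = u₀ ∧
      (∀ μ ∈ ball (0:ℂ) ρ, S (f μ) = S u₀ + μ • P (f μ)) ∧
      (∀ μ ∈ ball (0:ℂ) ρ, ‖f μ - u₀‖ ≤ C * ‖μ‖ * ‖u₀‖) := by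
  obtain ⟨C₀, hC₀, hsol⟩ := exists_preimage_norm_le S hS
  choose sol hsol1 hsol2 using hsol
  set a := C₀ * ‖P‖ + 1 with ha
  have ha1 : C₀ * ‖P‖ ≤ a := by simp [ha]
  have ha0 : 0 < a := by positivity
  have harho : (2*a)⁻¹ ≤ a⁻¹ := by
    apply inv_anti₀ ha0; nlinarith
  refine ⟨2 * a, by positivity, (2*a)⁻¹, by positivity, ?_⟩
  intro u₀
  set u : ℕ → Z := fun n => Nat.rec u₀ (fun _ x => sol (P x)) n with hu
  have hu0 : u 0 = u₀ := rfl
  have hus : ∀ n, u (n+1) = sol (P (u n)) := fun _ => rfl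
  have hSu : ∀ n, S (u (n+1)) = P (u n) := fun n => by rw [hus]; exact hsol1 _
  have hb : ∀ n, ‖u n‖ ≤ ‖u₀‖ * a ^ n := by
    intro n; induction n with
    | zero => simp [hu0]
    | succ n ih =>
      rw [hus]
      calc ‖sol (P (u n))‖ ≤ C₀ * ‖P (u n)‖ := hsol2 _
        _ ≤ C₀ * (‖P‖ * ‖u n‖) := by
            apply mul_le_mul_of_nonneg_left (P.le_opNorm _) (le_of_lt hC₀)
        _ = (C₀ * ‖P‖) * ‖u n‖ := by ring
        _ ≤ a * ‖u n‖ := mul_le_mul_of_nonneg_right ha1 (norm_nonneg _)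
        _ ≤ a * (‖u₀‖ * a ^ n) := mul_le_mul_of_nonneg_left ih (le_of_lt ha0)
        _ = ‖u₀‖ * a ^ (n+1) := by ring
  set f : ℂ → Z := fun μ => ∑' n, μ ^ n • u n with hf
  have hana : AnalyticOnNhd ℂ f (ball 0 a⁻¹) := analytic_geom_series u ‖u₀‖ a ha0 hb
  have hsmall : ∀ μ : ℂ, μ ∈ ball (0:ℂ) (2*a)⁻¹ → ‖μ‖ * a ≤ 1/2 := by
    intro μ hμ
    have h1 : ‖μ‖ < (2*a)⁻¹ := by simpa [mem_ball_zero_iff] using hμ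
    have h2 : ‖μ‖ * a < (2*a)⁻¹ * a := by
      apply mul_lt_mul_of_pos_right h1 ha0
    calc ‖μ‖ * a ≤ (2*a)⁻¹ * a := le_of_lt h2
      _ = 1/2 := by field_simp
  have hsummable : ∀ μ : ℂ, ‖μ‖ * a < 1 → Summable (fun n => μ ^ n • u n) := by
    intro μ hμ
    apply Summable.of_norm_bounded (g := fun n => ‖u₀‖ * (‖μ‖ * a) ^ n)
      ((summable_geometric_of_lt_one (by positivity) hμ).mul_left _)
    intro n
    rw [norm_smul, norm_pow]
    calc ‖μ‖ ^ n * ‖u n‖ ≤ ‖μ‖ ^ n * (‖u₀‖ * a ^ n) := by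
          apply mul_le_mul_of_nonneg_left (hb n) (by positivity)
      _ = ‖u₀‖ * (‖μ‖ * a) ^ n := by rw [mul_pow]; ring
  refine ⟨f, hana.mono (ball_subset_ball harho), ?_, ?_, ?_⟩
  · rw [hf]
    simp only
    rw [tsum_eq_single 0 (by intro n hn; rw [zero_pow hn, zero_smul])]
    simp [hu0]
  · intro μ hμ
    have hμ1 : ‖μ‖ * a < 1 := lt_of_le_of_lt (hsmall μ hμ) (by norm_num)
    have hsumm := hsummable μ hμ1
    have hsummS : Summable (fun n => μ ^ n • S (u n)) := by
      have := hsumm.map S.toLinearMap.toAddMonoidHom S.continuous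
      simpa [Function.comp_def, map_smul] using this
    have hsummP : Summable (fun n => μ ^ n • P (u n)) := by
      have := hsumm.map P.toLinearMap.toAddMonoidHom P.continuous
      simpa [Function.comp_def, map_smul] using this
    have h1 : S (f μ) = ∑' n, μ ^ n • S (u n) := by
      rw [hf]; simp only
      rw [S.map_tsum hsumm]
      congr 1; funext n; rw [map_smul]
    have h5 : P (f μ) = ∑' n, μ ^ n • P (u n) := by
      rw [hf]; simp only
      rw [P.map_tsum hsumm]
      congr 1; funext n; rw [map_smul]
    rw [h1, Summable.tsum_eq_zero_add hsummS]
    congr 1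
    · simp [hu0]
    · have : ∀ n : ℕ, μ ^ (n+1) • S (u (n+1)) = μ • (μ ^ n • P (u n)) := by
        intro n
        rw [hSu n, pow_succ', mul_smul]
      rw [tsum_congr this, (hsummP.hasSum.const_smul μ).tsum_eq, h5]
  · intro μ hμ
    have hμh := hsmall μ hμ
    have hμ1 : ‖μ‖ * a < 1 := lt_of_le_of_lt hμh (by norm_num)
    have hsumm := hsummable μ hμ1
    have hshift : Summable (fun n : ℕ => μ ^ (n+1) • u (n+1)) := by
      exact (summable_nat_add_iff 1).2 hsumm
    have hdiff : f μ - u₀ = ∑' n, μ ^ (n+1) • u (n+1) := by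
      rw [hf]; simp only
      rw [Summable.tsum_eq_zero_add hsumm]
      simp [hu0]
    rw [hdiff]
    have hgeo : Summable (fun n : ℕ => (‖μ‖ * a * ‖u₀‖) * (1/2 : ℝ) ^ n) :=
      (summable_geometric_of_lt_one (by norm_num) (by norm_num)).mul_left _
    have hterm : ∀ n : ℕ, ‖μ ^ (n+1) • u (n+1)‖ ≤ (‖μ‖ * a * ‖u₀‖) * (1/2 : ℝ) ^ n := by
      intro n
      rw [norm_smul, norm_pow]
      calc ‖μ‖ ^ (n+1) * ‖u (n+1)‖ ≤ ‖μ‖ ^ (n+1) * (‖u₀‖ * a ^ (n+1)) := by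
            apply mul_le_mul_of_nonneg_left (hb (n+1)) (by positivity)
        _ = (‖μ‖ * a) ^ (n+1) * ‖u₀‖ := by rw [mul_pow]; ring
        _ = (‖μ‖ * a) * (‖μ‖ * a) ^ n * ‖u₀‖ := by rw [pow_succ']
        _ ≤ (‖μ‖ * a) * (1/2 : ℝ) ^ n * ‖u₀‖ := by
            apply mul_le_mul_of_nonneg_right _ (norm_nonneg _)
            apply mul_le_mul_of_nonneg_left _ (by positivity)
            apply pow_le_pow_left₀ (by positivity) hμh
        _ = (‖μ‖ * a * ‖u₀‖) * (1/2 : ℝ) ^ n := by ring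
    have hsn : Summable (fun n : ℕ => ‖μ ^ (n+1) • u (n+1)‖) :=
      Summable.of_nonneg_of_le (fun n => norm_nonneg _) hterm hgeo
    calc ‖∑' n, μ ^ (n+1) • u (n+1)‖ ≤ ∑' n, ‖μ ^ (n+1) • u (n+1)‖ :=
          norm_tsum_le_tsum_norm hsn
      _ ≤ ∑' n, (‖μ‖ * a * ‖u₀‖) * (1/2 : ℝ) ^ n := Summable.tsum_le_tsum hterm hsn hgeo
      _ = (‖μ‖ * a * ‖u₀‖) * 2 := by
          rw [tsum_mul_left, tsum_geometric_of_lt_one (by norm_num) (by norm_num)]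
          norm_num
      _ = 2 * a * ‖μ‖ * ‖u₀‖ := by ring

/-- Shared setup: pencil basics. -/
lemma pencil_setup [CompleteSpace E] (T : E →L[ℂ] E)
    (hfd : FiniteDimensional ℂ (E ⧸ LinearMap.range (T : E →ₗ[ℂ] E))) :
    ∃ (d : ℕ) (J : (Fin d → ℂ) →L[ℂ] E)
      (S P : (E × (Fin d → ℂ)) →L[ℂ] E),
      d = Module.finrank ℂ (E ⧸ LinearMap.range (T : E →ₗ[ℂ] E)) ∧ Function.Injective J ∧
      Function.Surjective S ∧
      (∀ z : E × (Fin d → ℂ), S z = T z.1 + J z.2) ∧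
      (∀ z : E × (Fin d → ℂ), P z = z.1) := by
  obtain ⟨J, hJinj, hJsup⟩ := exists_surjectivization T hfd
  refine ⟨Module.finrank ℂ (E ⧸ LinearMap.range (T : E →ₗ[ℂ] E)), J,
    T.comp (fst ℂ E _) + J.comp (snd ℂ E _), fst ℂ E _,
    rfl, hJinj, ?_, fun z => rfl, fun z => rfl⟩
  intro v
  have hv : v ∈ LinearMap.range (T : E →ₗ[ℂ] E) ⊔ LinearMap.range (J : (Fin (Module.finrank ℂ (E ⧸ LinearMap.range (T : E →ₗ[ℂ] E))) → ℂ) →ₗ[ℂ] E) := hJsup ▸ Submodule.mem_top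
  obtain ⟨a, ⟨x, rfl⟩, b, ⟨w, rfl⟩, rfl⟩ := Submodule.mem_sup.1 hv
  exact ⟨(x, w), rfl⟩

lemma pencil_eq (T : E →L[ℂ] E) {d : ℕ} (J : (Fin d → ℂ) →L[ℂ] E)
    (S P : (E × (Fin d → ℂ)) →L[ℂ] E)
    (hS : ∀ z : E × (Fin d → ℂ), S z = T z.1 + J z.2)
    (hP : ∀ z : E × (Fin d → ℂ), P z = z.1) (μ : ℂ) (z : E × (Fin d → ℂ)) :
    S z - μ • P z = (T - μ • (1 : E →L[ℂ] E)) z.1 + J z.2 := by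
  rw [hS, hP]
  simp only [ContinuousLinearMap.sub_apply, ContinuousLinearMap.smul_apply,
    ContinuousLinearMap.one_apply]
  abel

/-- Stability of finite-codimension of the range, with codimension bound. -/
lemma range_sup_nbhd [CompleteSpace E] (T : E →L[ℂ] E)
    (hfd : FiniteDimensional ℂ (E ⧸ LinearMap.range (T : E →ₗ[ℂ] E))) :
    ∃ ε > (0:ℝ), ∀ μ : ℂ, ‖μ‖ < ε →
      FiniteDimensional ℂ (E ⧸ LinearMap.range ((T - μ • (1 : E →L[ℂ] E) : E →L[ℂ] E) : E →ₗ[ℂ] E)) ∧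
      Module.finrank ℂ (E ⧸ LinearMap.range ((T - μ • (1 : E →L[ℂ] E) : E →L[ℂ] E) : E →ₗ[ℂ] E)) ≤
        Module.finrank ℂ (E ⧸ LinearMap.range (T : E →ₗ[ℂ] E)) := by
  obtain ⟨d, J, S, P, hd, hJinj, hSsurj, hS, hP⟩ := pencil_setup T hfd
  obtain ⟨C, hC, ρ, hρ, heng⟩ := engine S P hSsurj
  refine ⟨ρ, hρ, fun μ hμ => ?_⟩
  have hsup : LinearMap.range ((T - μ • (1 : E →L[ℂ] E) : E →L[ℂ] E) : E →ₗ[ℂ] E) ⊔ LinearMap.range (J : (Fin d → ℂ) →ₗ[ℂ] E) = ⊤ := by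
    rw [eq_top_iff]
    intro v _
    obtain ⟨u₀, hu₀⟩ := hSsurj v
    obtain ⟨f, _, _, hfeq, _⟩ := heng u₀
    have h1 := hfeq μ (by simpa [mem_ball_zero_iff] using hμ)
    rw [hu₀] at h1
    have h2 : v = S (f μ) - μ • P (f μ) := by rw [h1]; abel
    rw [pencil_eq T J S P hS hP] at h2
    exact Submodule.mem_sup.2 ⟨_, ⟨(f μ).1, rfl⟩, _, ⟨(f μ).2, rfl⟩, h2.symm⟩
  haveI : FiniteDimensional ℂ ↥(LinearMap.range (J : (Fin d → ℂ) →ₗ[ℂ] E)) := by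
    have : FiniteDimensional ℂ (Fin d → ℂ) := inferInstance
    exact Module.Finite.range (J : (Fin d → ℂ) →ₗ[ℂ] E)
  refine ⟨fd_quot_of_sup _ _ hsup, ?_⟩
  calc Module.finrank ℂ (E ⧸ LinearMap.range ((T - μ • (1 : E →L[ℂ] E) : E →L[ℂ] E) : E →ₗ[ℂ] E))
      ≤ Module.finrank ℂ ↥(LinearMap.range (J : (Fin d → ℂ) →ₗ[ℂ] E)) := finrank_quot_le_of_sup _ _ hsup
    _ ≤ Module.finrank ℂ (Fin d → ℂ) := (J : (Fin d → ℂ) →ₗ[ℂ] E).finrank_range_le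
    _ = d := Module.finrank_fin_fun ℂ
    _ = _ := hd

/-- In an infinite-dimensional submodule we can find arbitrarily large
linearly independent families. -/
lemma exists_indep_in_ker (p : Submodule ℂ E) (hp : ¬ FiniteDimensional ℂ p) (N : ℕ) :
    ∃ v : Fin N → E, (∀ i, v i ∈ p) ∧ LinearIndependent ℂ v := by
  classical
  set b := Module.Basis.ofVectorSpace ℂ ↥p
  have hinf : (Module.Basis.ofVectorSpaceIndex ℂ ↥p).Infinite := by
    by_contra hfin
    rw [Set.not_infinite] at hfin
    haveI := hfin.fintype
    exact hp (Module.Finite.of_basis b)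
  haveI := hinf.to_subtype
  let emb := Infinite.natEmbedding ↥(Module.Basis.ofVectorSpaceIndex ℂ ↥p)
  let idx : Fin N → ↥(Module.Basis.ofVectorSpaceIndex ℂ ↥p) := fun i => emb i.val
  have hidx : Function.Injective idx := fun i j h => by
    have := emb.injective h
    exact Fin.val_injective this
  refine ⟨fun i => ((b (idx i) : ↥p) : E), fun i => (b (idx i)).2, ?_⟩
  have h1 : LinearIndependent ℂ (fun i : Fin N => b (idx i)) :=
    b.linearIndependent.comp idx hidx
  exact h1.map' p.subtype (Submodule.ker_subtype p)

/-- Kernels of the pencil are nontrivial in a neighborhood, provided the kernel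
is infinite-dimensional and the range has finite codimension. -/
lemma ker_nbhd [CompleteSpace E] (T : E →L[ℂ] E)
    (hfd : FiniteDimensional ℂ (E ⧸ LinearMap.range (T : E →ₗ[ℂ] E)))
    (hker : ¬ FiniteDimensional ℂ (LinearMap.ker (T : E →ₗ[ℂ] E))) :
    ∃ ε > (0:ℝ), ∀ μ : ℂ, ‖μ‖ < ε → LinearMap.ker ((T - μ • (1 : E →L[ℂ] E) : E →L[ℂ] E) : E →ₗ[ℂ] E) ≠ ⊥ := by
  classical
  obtain ⟨d, J, S, P, hd, hJinj, hSsurj, hS, hP⟩ := pencil_setup T hfd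
  obtain ⟨C, hC, ρ, hρ, heng⟩ := engine S P hSsurj
  set N := d + 1 with hN
  obtain ⟨v, hvmem, hvli⟩ := exists_indep_in_ker (LinearMap.ker (T : E →ₗ[ℂ] E)) hker N
  set u : Fin N → E × (Fin d → ℂ) := fun i => (v i, 0) with hu
  have huli : LinearIndependent ℂ u := by
    have := hvli.map' (LinearMap.inl ℂ E (Fin d → ℂ)) Submodule.ker_inl
    exact this
  have huS : ∀ i, S (u i) = 0 := by
    intro i
    rw [hS]
    simp only [hu, map_zero, add_zero]
    exact hvmem i
  set L₀ : (Fin N → ℂ) →ₗ[ℂ] (E × (Fin d → ℂ)) := Fintype.linearCombination ℂ u with hL₀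
  have hL₀inj : LinearMap.ker L₀ = ⊥ := by
    rw [LinearMap.ker_eq_bot']
    intro g hg
    have := Fintype.linearIndependent_iff.1 huli g (by
      simpa [hL₀, Fintype.linearCombination_apply] using hg)
    funext i; exact this i
  obtain ⟨K, hK0, hK⟩ := L₀.exists_antilipschitzWith hL₀inj
  have hlow : ∀ g : Fin N → ℂ, ‖g‖ ≤ (K:ℝ) * ‖L₀ g‖ := by
    intro g
    have := hK.le_mul_dist g 0
    simpa [dist_zero_right, map_zero] using this
  obtain ⟨Mu, hMu0, hMui⟩ : ∃ Mu : ℝ, 0 < Mu ∧ ∀ i, ‖u i‖ ≤ Mu := by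
    refine ⟨(∑ i, ‖u i‖) + 1, ?_, ?_⟩
    · have : (0:ℝ) ≤ ∑ i, ‖u i‖ := Finset.sum_nonneg fun i _ => norm_nonneg _
      linarith
    · intro i
      have := Finset.single_le_sum (f := fun i => ‖u i‖)
        (fun i _ => norm_nonneg _) (Finset.mem_univ i)
      linarith
  choose f hfana hf0 hfeq hfbd using heng
  have hKCMN : 0 < (K:ℝ) * (C * Mu * N) + 1 := by positivity
  refine ⟨min ρ (((K:ℝ) * (C * Mu * N) + 1)⁻¹), lt_min hρ (by positivity), fun μ hμ => ?_⟩
  have hμρ : μ ∈ ball (0:ℂ) ρ := by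
    rw [mem_ball_zero_iff]; exact lt_of_lt_of_le hμ (min_le_left _ _)
  have hμ2 : ‖μ‖ < ((K:ℝ) * (C * Mu * N) + 1)⁻¹ := lt_of_lt_of_le hμ (min_le_right _ _)
  intro hbot
  -- the linear map g ↦ second component of ∑ g i • f (u i) μ is injective
  set ψ : (Fin N → ℂ) →ₗ[ℂ] (Fin d → ℂ) :=
    (LinearMap.snd ℂ E (Fin d → ℂ)) ∘ₗ
      (Fintype.linearCombination ℂ (fun i => f (u i) μ)) with hψ
  have hψinj : Function.Injective ψ := by
    rw [← LinearMap.ker_eq_bot, LinearMap.ker_eq_bot']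
    intro g hg
    set z : E × (Fin d → ℂ) := ∑ i, g i • f (u i) μ with hz
    have hz2 : z.2 = 0 := by
      have h1 : z.2 = ∑ i, g i • (f (u i) μ).2 := by
        rw [hz, Prod.snd_sum]
        exact Finset.sum_congr rfl fun i _ => rfl
      have h2 : ψ g = ∑ i, g i • (f (u i) μ).2 := by
        simp [hψ, Fintype.linearCombination_apply, map_sum, map_smul, Prod.snd_sum]
      rw [h1, ← h2, hg]
    have hzeq : S z = μ • P z := by
      rw [hz, map_sum, map_sum]
      rw [Finset.smul_sum]
      apply Finset.sum_congr rfl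
      intro i _
      rw [map_smul, map_smul, hfeq (u i) μ hμρ, huS i, zero_add, smul_comm]
    have hz1 : (T - μ • (1 : E →L[ℂ] E)) z.1 = 0 := by
      have h0 : S z - μ • P z = 0 := by rw [hzeq]; abel
      rw [pencil_eq T J S P hS hP μ z, hz2, map_zero, add_zero] at h0
      exact h0
    have hz10 : z.1 = 0 := by
      have : z.1 ∈ LinearMap.ker ((T - μ • (1 : E →L[ℂ] E) : E →L[ℂ] E) : E →ₗ[ℂ] E) := hz1
      rw [hbot] at this
      simpa using this
    have hz0 : z = 0 := Prod.ext hz10 hz2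
    -- now use the antilipschitz bound
    clear_value z ψ L₀ u N
    by_contra hgne
    have hgpos : 0 < ‖g‖ := by
      rw [norm_pos_iff]; exact hgne
    have hdiff : L₀ g - z = ∑ i, g i • (u i - f (u i) μ) := by
      rw [hL₀, hz, Fintype.linearCombination_apply, ← Finset.sum_sub_distrib]
      apply Finset.sum_congr rfl
      intro i _
      rw [smul_sub]
    have hbnd : ‖L₀ g - z‖ ≤ (C * ‖μ‖ * Mu * N) * ‖g‖ := by
      rw [hdiff]
      calc ‖∑ i, g i • (u i - f (u i) μ)‖ ≤ ∑ i, ‖g i • (u i - f (u i) μ)‖ :=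
            norm_sum_le _ _
        _ ≤ ∑ i : Fin N, (C * ‖μ‖ * Mu) * ‖g‖ := by
            apply Finset.sum_le_sum
            intro i _
            rw [norm_smul]
            have h1 : ‖u i - f (u i) μ‖ ≤ C * ‖μ‖ * Mu := by
              rw [norm_sub_rev]
              calc ‖f (u i) μ - u i‖ ≤ C * ‖μ‖ * ‖u i‖ := hfbd (u i) μ hμρ
                _ ≤ C * ‖μ‖ * Mu := by
                    apply mul_le_mul_of_nonneg_left (hMui i) (by positivity)
            have h2 : ‖g i‖ ≤ ‖g‖ := norm_le_pi_norm g i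
            calc ‖g i‖ * ‖u i - f (u i) μ‖ ≤ ‖g‖ * (C * ‖μ‖ * Mu) := by
                  apply mul_le_mul h2 h1 (norm_nonneg _) (norm_nonneg _)
              _ = (C * ‖μ‖ * Mu) * ‖g‖ := by ring
        _ = (C * ‖μ‖ * Mu * N) * ‖g‖ := by
            rw [Finset.sum_const, Finset.card_univ, Fintype.card_fin]
            push_cast; ring
    have hfinal : ‖g‖ ≤ (K:ℝ) * ((C * ‖μ‖ * Mu * N) * ‖g‖) := by
      calc ‖g‖ ≤ (K:ℝ) * ‖L₀ g‖ := hlow g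
        _ = (K:ℝ) * ‖L₀ g - z‖ := by rw [hz0, sub_zero]
        _ ≤ (K:ℝ) * ((C * ‖μ‖ * Mu * N) * ‖g‖) := by
            apply mul_le_mul_of_nonneg_left hbnd (by positivity)
    have hKpos : (0:ℝ) < K := hK0
    have hcontr : (K:ℝ) * (C * ‖μ‖ * Mu * N) < 1 := by
      have h3 : ‖μ‖ * ((K:ℝ) * (C * Mu * N) + 1) < 1 := by
        have := mul_lt_mul_of_pos_right hμ2 hKCMN
        rwa [inv_mul_cancel₀ (ne_of_gt hKCMN)] at this
      have e1 : (K:ℝ) * (C * ‖μ‖ * Mu * ↑N) = ‖μ‖ * ((K:ℝ) * (C * Mu * ↑N)) := by ring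
      have e2 : ‖μ‖ * ((K:ℝ) * (C * Mu * ↑N)) ≤ ‖μ‖ * ((K:ℝ) * (C * Mu * ↑N) + 1) :=
        mul_le_mul_of_nonneg_left (by linarith) (norm_nonneg μ)
      linarith
    have h4 : (K:ℝ) * (C * ‖μ‖ * Mu * ↑N * ‖g‖) = ((K:ℝ) * (C * ‖μ‖ * Mu * ↑N)) * ‖g‖ := by ring
    rw [h4] at hfinal
    have h5 := mul_lt_mul_of_pos_right hcontr hgpos
    rw [one_mul] at h5
    linarith
  have hrank := LinearMap.finrank_le_finrank_of_injective hψinj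
  rw [Module.finrank_fin_fun ℂ, Module.finrank_fin_fun ℂ] at hrank
  omega

/-- If `B - λ₀` has finite-codimensional range but infinite-dimensional kernel,
then `B` fails the SVEP at `λ₀`. -/
lemma svep_fails [CompleteSpace E] (B : E →L[ℂ] E) (lam : ℂ)
    (hfd : FiniteDimensional ℂ (E ⧸ LinearMap.range ((B - lam • (1 : E →L[ℂ] E) : E →L[ℂ] E) : E →ₗ[ℂ] E)))
    (hker : ¬ FiniteDimensional ℂ (LinearMap.ker ((B - lam • (1 : E →L[ℂ] E) : E →L[ℂ] E) : E →ₗ[ℂ] E))) :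
    ¬ HasSVEPAt B lam := by
  set T := B - lam • (1 : E →L[ℂ] E) with hT
  rintro ⟨r, hr, hsvep⟩
  obtain ⟨ε₁, hε₁, hnb⟩ := range_sup_nbhd T hfd
  obtain ⟨ε₂, hε₂, hkn⟩ := ker_nbhd T hfd hker
  set ε := min (min ε₁ ε₂) r with hε
  have hεpos : 0 < ε := lt_min (lt_min hε₁ hε₂) hr
  have hεε₁ : ε ≤ ε₁ := le_trans (min_le_left _ _) (min_le_left _ _)
  have hεε₂ : ε ≤ ε₂ := le_trans (min_le_left _ _) (min_le_right _ _)
  have hεr : ε ≤ r := min_le_right _ _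
  have hfdμ : ∀ μ : ℂ, ‖μ‖ < ε →
      FiniteDimensional ℂ (E ⧸ LinearMap.range ((T - μ • (1 : E →L[ℂ] E) : E →L[ℂ] E) : E →ₗ[ℂ] E)) :=
    fun μ h => (hnb μ (lt_of_lt_of_le h hεε₁)).1
  -- pick a point minimizing the codimension of the range
  set Dset : Set ℕ := {n | ∃ μ : ℂ, ‖μ‖ < ε ∧
    Module.finrank ℂ (E ⧸ LinearMap.range ((T - μ • (1 : E →L[ℂ] E) : E →L[ℂ] E) : E →ₗ[ℂ] E)) = n} with hDset
  have hDne : Dset.Nonempty := ⟨_, 0, by simpa using hεpos, rfl⟩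
  obtain ⟨μ₀, hμ₀ε, hμ₀min⟩ : ∃ μ₀ : ℂ, ‖μ₀‖ < ε ∧
      Module.finrank ℂ (E ⧸ LinearMap.range ((T - μ₀ • (1 : E →L[ℂ] E) : E →L[ℂ] E) : E →ₗ[ℂ] E)) = sInf Dset :=
    Nat.sInf_mem hDne
  set T₀ := T - μ₀ • (1 : E →L[ℂ] E) with hT₀
  haveI hfd₀ : FiniteDimensional ℂ (E ⧸ LinearMap.range (T₀ : E →ₗ[ℂ] E)) := hfdμ μ₀ hμ₀ε
  obtain ⟨d, J, S, P, hd, hJinj, hSsurj, hS, hP⟩ := pencil_setup T₀ hfd₀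
  obtain ⟨C, hC, ρ, hρ, heng⟩ := engine S P hSsurj
  obtain ⟨y₀, hy₀mem, hy₀ne⟩ := Submodule.ne_bot_iff _ |>.1 (hkn μ₀ (lt_of_lt_of_le hμ₀ε hεε₂))
  have hu₀ : S (y₀, (0 : Fin d → ℂ)) = 0 := by
    rw [hS]
    simp only [map_zero, add_zero]
    exact hy₀mem
  obtain ⟨f, hfana, hf0, hfeq, hfbd⟩ := heng (y₀, 0)
  set ρ₂ := min ρ (ε - ‖μ₀‖) with hρ₂
  have hρ₂pos : 0 < ρ₂ := lt_min hρ (by linarith)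
  have hρ₂ρ : ρ₂ ≤ ρ := min_le_left _ _
  -- pencil identity and translation
  have hpencil : ∀ ν : ℂ, T₀ - ν • (1 : E →L[ℂ] E) = T - (μ₀ + ν) • (1 : E →L[ℂ] E) := by
    intro ν
    rw [hT₀, add_smul, sub_sub]
  -- ranges stay complemented by J
  have hsup : ∀ ν : ℂ, ‖ν‖ < ρ →
      LinearMap.range ((T₀ - ν • (1 : E →L[ℂ] E) : E →L[ℂ] E) : E →ₗ[ℂ] E) ⊔ LinearMap.range (J : (Fin d → ℂ) →ₗ[ℂ] E) = ⊤ := by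
    intro ν hν
    rw [eq_top_iff]
    intro v _
    obtain ⟨u₀, hu₀v⟩ := hSsurj v
    obtain ⟨fv, _, _, hfveq, _⟩ := heng u₀
    have h1 := hfveq ν (by simpa [mem_ball_zero_iff] using hν)
    rw [hu₀v] at h1
    have h2 : v = S (fv ν) - ν • P (fv ν) := by rw [h1]; abel
    rw [pencil_eq T₀ J S P hS hP] at h2
    exact Submodule.mem_sup.2 ⟨_, ⟨(fv ν).1, rfl⟩, _, ⟨(fv ν).2, rfl⟩, h2.symm⟩
  haveI hJfd : FiniteDimensional ℂ ↥(LinearMap.range (J : (Fin d → ℂ) →ₗ[ℂ] E)) :=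
    Module.Finite.range (J : (Fin d → ℂ) →ₗ[ℂ] E)
  have hJrank : Module.finrank ℂ ↥(LinearMap.range (J : (Fin d → ℂ) →ₗ[ℂ] E)) ≤ sInf Dset := by
    calc Module.finrank ℂ ↥(LinearMap.range (J : (Fin d → ℂ) →ₗ[ℂ] E))
        ≤ Module.finrank ℂ (Fin d → ℂ) := (J : (Fin d → ℂ) →ₗ[ℂ] E).finrank_range_le
      _ = d := Module.finrank_fin_fun ℂ
      _ = _ := by rw [hd, hμ₀min]
  -- on the small ball, the second component of the section vanishes
  have hkerfam : ∀ ν : ℂ, ‖ν‖ < ρ₂ →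
      (T - (μ₀ + ν) • (1 : E →L[ℂ] E)) ((f ν).1) = 0 := by
    intro ν hν
    have hνρ : ‖ν‖ < ρ := lt_of_lt_of_le hν hρ₂ρ
    have hνball : ν ∈ ball (0:ℂ) ρ := by simpa [mem_ball_zero_iff] using hνρ
    have hμν : ‖μ₀ + ν‖ < ε := by
      calc ‖μ₀ + ν‖ ≤ ‖μ₀‖ + ‖ν‖ := norm_add_le _ _
        _ < ‖μ₀‖ + (ε - ‖μ₀‖) := by
            have : ‖ν‖ < ε - ‖μ₀‖ := lt_of_lt_of_le hν (min_le_right _ _)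
            linarith
        _ = ε := by ring
    have h1 := hfeq ν hνball
    rw [hu₀] at h1
    have h2 : S (f ν) - ν • P (f ν) = 0 := by rw [h1]; abel
    rw [pencil_eq T₀ J S P hS hP] at h2
    -- now the intersection argument
    haveI := hfdμ (μ₀ + ν) hμν
    have hmin : sInf Dset ≤
        Module.finrank ℂ (E ⧸ LinearMap.range ((T - (μ₀ + ν) • (1 : E →L[ℂ] E) : E →L[ℂ] E) : E →ₗ[ℂ] E)) :=
      Nat.sInf_le ⟨μ₀ + ν, hμν, rfl⟩
    have hsupν := hsup ν hνρ
    rw [hpencil ν] at hsupν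
    have hinf : LinearMap.range ((T - (μ₀ + ν) • (1 : E →L[ℂ] E) : E →L[ℂ] E) : E →ₗ[ℂ] E) ⊓ LinearMap.range (J : (Fin d → ℂ) →ₗ[ℂ] E) = ⊥ :=
      inf_bot_of_min _ _ hsupν (sInf Dset) hJrank hmin
    rw [hpencil ν] at h2
    have hmem : J ((f ν).2) ∈
        LinearMap.range ((T - (μ₀ + ν) • (1 : E →L[ℂ] E) : E →L[ℂ] E) : E →ₗ[ℂ] E) ⊓ LinearMap.range (J : (Fin d → ℂ) →ₗ[ℂ] E) := by
      constructor
      · have : J ((f ν).2) = (T - (μ₀ + ν) • (1 : E →L[ℂ] E)) (-(f ν).1) := by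
          rw [map_neg]
          have := h2
          linear_combination (norm := module) this
        rw [this]
        exact ⟨-(f ν).1, rfl⟩
      · exact ⟨(f ν).2, rfl⟩
    rw [hinf] at hmem
    have hw0 : (f ν).2 = 0 := by
      apply hJinj
      rw [map_zero]
      simpa using hmem
    rw [hw0, map_zero, add_zero] at h2
    exact h2
  -- build the counterexample to SVEP
  set c := lam + μ₀ with hc
  set V := ball c ρ₂ with hV
  have hVsub : V ⊆ ball lam r := by
    intro z hz
    rw [mem_ball] at hz ⊢
    calc dist z lam ≤ dist z c + dist c lam := dist_triangle _ _ _
      _ < ρ₂ + ‖μ₀‖ := by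
          apply add_lt_add_of_lt_of_le hz
          simp [hc, dist_eq_norm]
      _ ≤ (ε - ‖μ₀‖) + ‖μ₀‖ := by
          have : ρ₂ ≤ ε - ‖μ₀‖ := min_le_right _ _
          linarith
      _ = ε := by ring
      _ ≤ r := hεr
  set g : ℂ → E := fun z => (f (z - c)).1 with hg
  have hinner : ∀ z ∈ V, z - c ∈ ball (0:ℂ) ρ₂ := by
    intro z hz
    rw [mem_ball_zero_iff]
    rw [mem_ball, dist_eq_norm] at hz
    exact hz
  have hgana : AnalyticOnNhd ℂ g V := by
    have hinner_ana : AnalyticOnNhd ℂ (fun z : ℂ => z - c) V :=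
      (analyticOnNhd_id).sub analyticOnNhd_const
    have hcomp : AnalyticOnNhd ℂ (fun z => f (z - c)) V := by
      exact (hfana.mono (ball_subset_ball hρ₂ρ)).comp hinner_ana hinner
    exact (fst ℂ E (Fin d → ℂ)).comp_analyticOnNhd hcomp
  have hgeq : ∀ z ∈ V, (B - z • (1 : E →L[ℂ] E)) (g z) = 0 := by
    intro z hz
    have hνball : ‖z - c‖ < ρ₂ := by
      have := hinner z hz
      rwa [mem_ball_zero_iff] at this
    have hBz : B - z • (1 : E →L[ℂ] E) = T - (μ₀ + (z - c)) • (1 : E →L[ℂ] E) := by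
      rw [hT, sub_sub, ← add_smul]
      congr 2
      rw [hc]
      ring
    rw [hBz]
    exact hkerfam (z - c) hνball
  have hzero := hsvep V hVsub isOpen_ball g hgana hgeq c (mem_ball_self hρ₂pos)
  apply hy₀ne
  have : g c = y₀ := by
    rw [hg]
    simp only [sub_self]
    rw [hf0]
  rw [← this, hzero]

lemma ucMat_apply (A : X →L[ℂ] X) (B : Y →L[ℂ] Y) (C : Y →L[ℂ] X) (p : X × Y) :
    ucMat A B C p = (A p.1 + C p.2, B p.2) := rfl

lemma ucMat_sub_smul (A : X →L[ℂ] X) (B : Y →L[ℂ] Y) (C : Y →L[ℂ] X) (z : ℂ) :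
    ucMat A B C - z • (1 : (X × Y) →L[ℂ] (X × Y)) =
      ucMat (A - z • (1 : X →L[ℂ] X)) (B - z • (1 : Y →L[ℂ] Y)) C := by
  refine ContinuousLinearMap.ext fun p => ?_
  simp only [ContinuousLinearMap.sub_apply, ContinuousLinearMap.smul_apply,
    ContinuousLinearMap.one_apply, ucMat_apply]
  refine Prod.ext ?_ ?_
  · simp only [Prod.fst_sub, Prod.smul_fst]
    abel
  · simp only [Prod.snd_sub, Prod.smul_snd]

lemma fdB_of_fdM (A : X →L[ℂ] X) (B : Y →L[ℂ] Y) (C : Y →L[ℂ] X)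
    (h : FiniteDimensional ℂ ((X × Y) ⧸ LinearMap.range ((ucMat A B C) : (X × Y) →ₗ[ℂ] (X × Y)))) :
    FiniteDimensional ℂ (Y ⧸ LinearMap.range (B : Y →ₗ[ℂ] Y)) := by
  have hle : LinearMap.range ((ucMat A B C) : (X × Y) →ₗ[ℂ] (X × Y)) ≤
      LinearMap.ker ((LinearMap.range (B : Y →ₗ[ℂ] Y)).mkQ ∘ₗ (LinearMap.snd ℂ X Y)) := by
    rintro _ ⟨⟨x, y⟩, rfl⟩
    simp only [LinearMap.mem_ker, LinearMap.comp_apply, LinearMap.snd_apply,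
      Submodule.mkQ_apply, ucMat_apply]
    exact (Submodule.Quotient.mk_eq_zero _).2 ⟨y, rfl⟩
  apply Module.Finite.of_surjective (Submodule.liftQ _ _ hle)
  intro c
  obtain ⟨v, rfl⟩ := (LinearMap.range (B : Y →ₗ[ℂ] Y)).mkQ_surjective c
  exact ⟨Submodule.Quotient.mk ((0 : X), v), by
    rw [Submodule.liftQ_apply]; rfl⟩

lemma fdS_of_fdM (A : X →L[ℂ] X) (B : Y →L[ℂ] Y) (C : Y →L[ℂ] X)
    (h : FiniteDimensional ℂ ((X × Y) ⧸ LinearMap.range ((ucMat A B C) : (X × Y) →ₗ[ℂ] (X × Y)))) :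
    FiniteDimensional ℂ
      (X ⧸ (LinearMap.range (A : X →ₗ[ℂ] X) ⊔ Submodule.map (C : Y →ₗ[ℂ] X) (LinearMap.ker (B : Y →ₗ[ℂ] Y)))) := by
  set Sm := LinearMap.range (A : X →ₗ[ℂ] X) ⊔ Submodule.map (C : Y →ₗ[ℂ] X) (LinearMap.ker (B : Y →ₗ[ℂ] Y)) with hSm
  have hle : Sm ≤ LinearMap.ker
      ((LinearMap.range ((ucMat A B C) : (X × Y) →ₗ[ℂ] (X × Y))).mkQ ∘ₗ (LinearMap.inl ℂ X Y)) := by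
    intro x hx
    obtain ⟨a, ⟨xa, rfl⟩, b, ⟨yb, hyb, rfl⟩, rfl⟩ := Submodule.mem_sup.1 hx
    simp only [LinearMap.mem_ker, LinearMap.comp_apply, LinearMap.inl_apply,
      Submodule.mkQ_apply]
    apply (Submodule.Quotient.mk_eq_zero _).2
    refine ⟨(xa, yb), ?_⟩
    rw [ContinuousLinearMap.coe_coe, ucMat_apply]
    have : B yb = 0 := hyb
    simp [this]
  have hker : LinearMap.ker
      ((LinearMap.range ((ucMat A B C) : (X × Y) →ₗ[ℂ] (X × Y))).mkQ ∘ₗ (LinearMap.inl ℂ X Y)) ≤ Sm := by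
    intro x hx
    simp only [LinearMap.mem_ker, LinearMap.comp_apply, LinearMap.inl_apply,
      Submodule.mkQ_apply] at hx
    obtain ⟨⟨a, b⟩, hab⟩ := (Submodule.Quotient.mk_eq_zero _).1 hx
    rw [ContinuousLinearMap.coe_coe, ucMat_apply, Prod.mk.injEq] at hab
    obtain ⟨h1, h2⟩ := hab
    apply Submodule.mem_sup.2
    refine ⟨A a, ⟨a, rfl⟩, C b, ⟨b, h2, rfl⟩, h1⟩
  apply FiniteDimensional.of_injective (Submodule.liftQ Sm _ hle)
  rw [← LinearMap.ker_eq_bot]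
  exact Submodule.ker_liftQ_eq_bot _ _ _ hker

lemma fdM_of_fd (A : X →L[ℂ] X) (B : Y →L[ℂ] Y) (C : Y →L[ℂ] X)
    (hA : FiniteDimensional ℂ (X ⧸ LinearMap.range (A : X →ₗ[ℂ] X)))
    (hB : FiniteDimensional ℂ (Y ⧸ LinearMap.range (B : Y →ₗ[ℂ] Y))) :
    FiniteDimensional ℂ ((X × Y) ⧸ LinearMap.range ((ucMat A B C) : (X × Y) →ₗ[ℂ] (X × Y))) := by
  obtain ⟨F, hFfd, hFsup⟩ := exists_fd_compl (LinearMap.range (A : X →ₗ[ℂ] X))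
  obtain ⟨G, hGfd, hGsup⟩ := exists_fd_compl (LinearMap.range (B : Y →ₗ[ℂ] Y))
  haveI := hFfd; haveI := hGfd
  haveI : FiniteDimensional ℂ ↥(F.prod G) := by
    rw [LinearMap.prod_eq_sup_map]
    infer_instance
  apply fd_quot_of_sup _ (F.prod G)
  rw [eq_top_iff]
  rintro ⟨u, v⟩ _
  have hv : v ∈ LinearMap.range (B : Y →ₗ[ℂ] Y) ⊔ G := hGsup ▸ Submodule.mem_top
  obtain ⟨b1, ⟨y, rfl⟩, g2, hg2, hveq⟩ := Submodule.mem_sup.1 hv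
  have hu : u - C y ∈ LinearMap.range (A : X →ₗ[ℂ] X) ⊔ F := hFsup ▸ Submodule.mem_top
  obtain ⟨a1, ⟨x, rfl⟩, g1, hg1, hueq⟩ := Submodule.mem_sup.1 hu
  apply Submodule.mem_sup.2
  refine ⟨ucMat A B C (x, y), ⟨(x, y), rfl⟩, (g1, g2), ⟨hg1, hg2⟩, ?_⟩
  rw [ucMat_apply, Prod.mk_add_mk, Prod.mk.injEq]
  constructor
  · have : A x + g1 = u - C y := hueq
    linear_combination (norm := module) this
  · exact hveq

theorem stmt10 (A : X →L[ℂ] X) (B : Y →L[ℂ] Y) (C : Y →L[ℂ] X) :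
    lowerSFSpectrum (ucMat A B C) ∪ svepFail B =
      lowerSFSpectrum A ∪ lowerSFSpectrum B ∪ svepFail B := by
  ext z
  simp only [mem_union, lowerSFSpectrum, svepFail, mem_setOf_eq]
  by_cases hsv : HasSVEPAt B z
  · simp only [hsv, not_true_eq_false, or_false]
    have key : IsLowerSemiFredholm (ucMat A B C - z • 1) ↔
        (IsLowerSemiFredholm (A - z • (1 : X →L[ℂ] X)) ∧
         IsLowerSemiFredholm (B - z • (1 : Y →L[ℂ] Y))) := by
      rw [IsLowerSemiFredholm, ucMat_sub_smul, IsLowerSemiFredholm, IsLowerSemiFredholm]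
      constructor
      · intro h
        have hB : FiniteDimensional ℂ (Y ⧸ LinearMap.range ((B - z • (1 : Y →L[ℂ] Y) : Y →L[ℂ] Y) : Y →ₗ[ℂ] Y)) :=
          fdB_of_fdM (A - z • (1 : X →L[ℂ] X)) (B - z • (1 : Y →L[ℂ] Y)) C h
        refine ⟨?_, hB⟩
        by_contra hA
        have hSfd := fdS_of_fdM (A - z • (1 : X →L[ℂ] X)) (B - z • (1 : Y →L[ℂ] Y)) C h
        by_cases hk : FiniteDimensional ℂ
            (LinearMap.ker ((B - z • (1 : Y →L[ℂ] Y) : Y →L[ℂ] Y) : Y →ₗ[ℂ] Y))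
        · haveI := hk
          exact hA (fd_quot_of_fd_sup _ _ hSfd)
        · exact (svep_fails B z hB hk) hsv
      · rintro ⟨hA, hB⟩
        exact fdM_of_fd _ _ _ hA hB
    tauto
  · simp only [hsv, not_false_eq_true, or_true]
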